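/- Let G and S be n×n real 0-1 matrices, and let X be an n×n doubly stochastic matrix such that X·S·Xᵀ ≤ G entrywise. Then there exists a permutation matrix P such that P·S·Pᵀ ≤ G entrywise. -/

import Mathlib

open Matrix BigOperators

/-- A permutation matrix: a square 0-1 matrix with exactly one 1 in each row
and each column. -/
def IsPermMatrix {n : ℕ} (X : Matrix (Fin n) (Fin n) ℝ) : Prop :=
  (∀ i j, X i j = 0 ∨ X i j = 1) ∧ (∀ i, ∃! j, X i j = 1) ∧ (∀ j, ∃! i, X i j = 1)

/-- A doubly stochastic matrix: nonnegative entries, all row sums and column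
sums equal to 1. -/
def IsDoublyStochastic {n : ℕ} (X : Matrix (Fin n) (Fin n) ℝ) : Prop :=
  (∀ i j, 0 ≤ X i j) ∧ (∀ i, ∑ j, X i j = 1) ∧ (∀ j, ∑ i, X i j = 1)

theorem stmt_5 {n : ℕ} (G S X : Matrix (Fin n) (Fin n) ℝ)
    (hG : ∀ i j, G i j = 0 ∨ G i j = 1)
    (hS : ∀ i j, S i j = 0 ∨ S i j = 1)
    (hX : IsDoublyStochastic X)
    (h : ∀ i j, (X * S * Xᵀ) i j ≤ G i j) :
    ∃ P : Matrix (Fin n) (Fin n) ℝ,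
      IsPermMatrix P ∧ ∀ i j, (P * S * Pᵀ) i j ≤ G i j := by
  -- X is doubly stochastic in mathlib's sense
  have hXmem : X ∈ doublyStochastic ℝ (Fin n) :=
    mem_doublyStochastic_iff_sum.2 ⟨hX.1, hX.2.1, hX.2.2⟩
  obtain ⟨w, hw0, hw1, hwX⟩ := exists_eq_sum_perm_of_mem_doublyStochastic hXmem
  -- pick a permutation with positive weight
  have hσ : ∃ σ : Equiv.Perm (Fin n), 0 < w σ := by
    by_contra hc
    push_neg at hc
    have : ∑ σ, w σ = 0 := Finset.sum_eq_zero fun σ _ => le_antisymm (hc σ) (hw0 σ)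
    rw [hw1] at this; norm_num at this
  obtain ⟨σ, hσpos⟩ := hσ
  -- X i (σ i) ≥ w σ > 0
  have hXpos : ∀ i, 0 < X i (σ i) := by
    intro i
    have : X i (σ i) = ∑ τ : Equiv.Perm (Fin n), w τ * (τ.permMatrix ℝ) i (σ i) := by
      rw [← hwX]; simp only [Matrix.sum_apply, Matrix.smul_apply, smul_eq_mul]
    rw [this]
    have hterm : w σ * (σ.permMatrix ℝ) i (σ i) = w σ := by
      simp [Equiv.Perm.permMatrix, PEquiv.toMatrix_apply, Equiv.toPEquiv_apply]
    calc (0:ℝ) < w σ := hσpos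
      _ = w σ * (σ.permMatrix ℝ) i (σ i) := hterm.symm
      _ ≤ ∑ τ : Equiv.Perm (Fin n), w τ * (τ.permMatrix ℝ) i (σ i) := by
          apply Finset.single_le_sum (f := fun τ => w τ * (τ.permMatrix ℝ) i (σ i))
            (fun τ _ => ?_) (Finset.mem_univ σ)
          refine mul_nonneg (hw0 τ) ?_
          simp only [Equiv.Perm.permMatrix, PEquiv.toMatrix_apply, Equiv.toPEquiv_apply]
          positivity
  -- define the permutation matrix
  set P : Matrix (Fin n) (Fin n) ℝ := fun i j => if σ i = j then 1 else 0 with hP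
  have hPentry : ∀ i j, P i j = if σ i = j then 1 else 0 := fun i j => rfl
  have hPerm : IsPermMatrix P := by
    refine ⟨fun i j => ?_, fun i => ⟨σ i, by simp [hPentry], fun j hj => ?_⟩,
      fun j => ⟨σ.symm j, by simp [hPentry], fun i hi => ?_⟩⟩
    · rw [hPentry]; split <;> simp
    · simp only [hPentry] at hj; by_contra hne
      rw [if_neg (fun hh => hne hh.symm)] at hj; norm_num at hj
    · simp only [hPentry] at hi
      by_contra hne
      have : σ i ≠ j := fun hh => hne (by rw [← hh]; simp)
      rw [if_neg this] at hi; norm_num at hi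
  refine ⟨P, hPerm, fun i j => ?_⟩
  -- compute (P S Pᵀ) i j = S (σ i) (σ j)
  have hPSP : (P * S * Pᵀ) i j = S (σ i) (σ j) := by
    simp only [Matrix.mul_apply, Matrix.transpose_apply, hPentry, ite_mul, one_mul,
      zero_mul, mul_ite, mul_one, mul_zero, Finset.sum_ite_eq, Finset.mem_univ, if_true]
  rw [hPSP]
  rcases hG i j with hg | hg
  · -- G i j = 0 : every term of (X S Xᵀ) i j vanishes
    rw [hg]
    have hsum : (X * S * Xᵀ) i j = ∑ k, ∑ l, X i k * S k l * X j l := by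
      simp only [Matrix.mul_apply, Matrix.transpose_apply, Finset.sum_mul]
      rw [Finset.sum_comm]
    have hnn : ∀ k ∈ (Finset.univ : Finset (Fin n)),
        0 ≤ ∑ l, X i k * S k l * X j l := by
      intro k _
      refine Finset.sum_nonneg fun l _ => ?_
      have hs : 0 ≤ S k l := by rcases hS k l with hh | hh <;> rw [hh] <;> norm_num
      exact mul_nonneg (mul_nonneg (hX.1 i k) hs) (hX.1 j l)
    have hle : ∑ k, ∑ l, X i k * S k l * X j l ≤ 0 := by
      rw [← hsum, ← hg]; exact h i j
    have hzero : ∑ k, ∑ l, X i k * S k l * X j l = 0 :=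
      le_antisymm hle (Finset.sum_nonneg hnn)
    have h1 := (Finset.sum_eq_zero_iff_of_nonneg hnn).1 hzero (σ i) (Finset.mem_univ _)
    have h2 := (Finset.sum_eq_zero_iff_of_nonneg
      (fun l _ => by
        have hs : 0 ≤ S (σ i) l := by rcases hS (σ i) l with hh | hh <;> rw [hh] <;> norm_num
        exact mul_nonneg (mul_nonneg (hX.1 i (σ i)) hs) (hX.1 j l))).1 h1 (σ j)
      (Finset.mem_univ _)
    have hXi := hXpos i
    have hXj := hXpos j
    have : S (σ i) (σ j) = 0 := by
      by_contra hne
      rcases hS (σ i) (σ j) with hh | hh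
      · exact hne hh
      · rw [hh] at h2; nlinarith
    rw [this]
  · rw [hg]
    rcases hS (σ i) (σ j) with hh | hh <;> rw [hh] <;> norm_num
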